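/- (Logistic sigmoid weighting inequality) For real numbers Q₁, Q₂ and a > 0, let w = e^{−aQ₁}/(e^{−aQ₁} + e^{−aQ₂}). Then w Q₁ + (1−w) Q₂ ≤ min(Q₁, Q₂) + (log 2)/a. -/
import Mathlib

/-- Key scalar inequality: `x ≤ log 2 * (1 + e^x)` for `x ≥ 0`. -/
lemma aux_sigmoid (x : ℝ) (hx : 0 ≤ x) : x ≤ Real.log 2 * (1 + Real.exp x) := by
  have h1 : x - 1 + 1 ≤ Real.exp (x - 1) := Real.add_one_le_exp (x - 1)
  have h2 : Real.exp (x - 1) = Real.exp x / Real.exp 1 := Real.exp_sub x 1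
  have he : (2.7182818283 : ℝ) < Real.exp 1 := Real.exp_one_gt_d9
  have hl : (0.6931471803 : ℝ) < Real.log 2 := Real.log_two_gt_d9
  have hex : 0 < Real.exp x := Real.exp_pos x
  have he1 : 0 < Real.exp 1 := Real.exp_pos 1
  have h3 : x * Real.exp 1 ≤ Real.exp x := by
    rw [h2] at h1
    calc x * Real.exp 1 ≤ (Real.exp x / Real.exp 1) * Real.exp 1 := by
          apply mul_le_mul_of_nonneg_right (by linarith) he1.le
      _ = Real.exp x := by field_simp
  nlinarith [mul_pos hex (sub_pos.mpr hl)]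

/-- logistic sigmoid weighting inequality: for `Q₁, Q₂ ∈ ℝ` and `a > 0`,
with `w = e^{−aQ₁}/(e^{−aQ₁} + e^{−aQ₂})`, one has
`w Q₁ + (1−w) Q₂ ≤ min(Q₁, Q₂) + (log 2)/a`. -/
theorem sigmoid_weighting_inequality (Q1 Q2 a : ℝ) (ha : 0 < a)
    (w : ℝ) (hw : w = Real.exp (-a * Q1) / (Real.exp (-a * Q1) + Real.exp (-a * Q2))) :
    w * Q1 + (1 - w) * Q2 ≤ min Q1 Q2 + Real.log 2 / a := by
  subst hw
  have hE1 : 0 < Real.exp (-a * Q1) := Real.exp_pos _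
  have hE2 : 0 < Real.exp (-a * Q2) := Real.exp_pos _
  have hS : 0 < Real.exp (-a * Q1) + Real.exp (-a * Q2) := by linarith
  rcases le_total Q1 Q2 with h | h
  · rw [min_eq_left h]
    have hx : 0 ≤ a * (Q2 - Q1) := mul_nonneg ha.le (by linarith)
    have key := aux_sigmoid _ hx
    have hrel : Real.exp (a * (Q2 - Q1)) = Real.exp (-a * Q1) / Real.exp (-a * Q2) := by
      rw [← Real.exp_sub]; ring_nf
    rw [hrel] at key
    have key2 : a * (Q2 - Q1) * Real.exp (-a * Q2)
        ≤ Real.log 2 * (Real.exp (-a * Q1) + Real.exp (-a * Q2)) := by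
      have h4 := mul_le_mul_of_nonneg_right key hE2.le
      calc a * (Q2 - Q1) * Real.exp (-a * Q2)
          ≤ Real.log 2 * (1 + Real.exp (-a * Q1) / Real.exp (-a * Q2)) * Real.exp (-a * Q2) := h4
        _ = Real.log 2 * (Real.exp (-a * Q1) + Real.exp (-a * Q2)) := by
          field_simp
          ring_nf
          try tauto
    rw [← sub_nonneg]
    have expand : Q1 + Real.log 2 / a -
        (Real.exp (-a * Q1) / (Real.exp (-a * Q1) + Real.exp (-a * Q2)) * Q1 +
          (1 - Real.exp (-a * Q1) / (Real.exp (-a * Q1) + Real.exp (-a * Q2))) * Q2)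
        = (Real.log 2 * (Real.exp (-a * Q1) + Real.exp (-a * Q2))
            - a * (Q2 - Q1) * Real.exp (-a * Q2))
          / (a * (Real.exp (-a * Q1) + Real.exp (-a * Q2))) := by
      field_simp; ring
    rw [expand]
    apply div_nonneg (by linarith) (by positivity)
  · rw [min_eq_right h]
    have hx : 0 ≤ a * (Q1 - Q2) := mul_nonneg ha.le (by linarith)
    have key := aux_sigmoid _ hx
    have hrel : Real.exp (a * (Q1 - Q2)) = Real.exp (-a * Q2) / Real.exp (-a * Q1) := by
      rw [← Real.exp_sub]; ring_nf
    rw [hrel] at key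
    have key2 : a * (Q1 - Q2) * Real.exp (-a * Q1)
        ≤ Real.log 2 * (Real.exp (-a * Q1) + Real.exp (-a * Q2)) := by
      have h4 := mul_le_mul_of_nonneg_right key hE1.le
      calc a * (Q1 - Q2) * Real.exp (-a * Q1)
          ≤ Real.log 2 * (1 + Real.exp (-a * Q2) / Real.exp (-a * Q1)) * Real.exp (-a * Q1) := h4
        _ = Real.log 2 * (Real.exp (-a * Q1) + Real.exp (-a * Q2)) := by
          field_simp
          try ring_nf
          try tauto
    rw [← sub_nonneg]
    have expand : Q2 + Real.log 2 / a -
        (Real.exp (-a * Q1) / (Real.exp (-a * Q1) + Real.exp (-a * Q2)) * Q1 +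
          (1 - Real.exp (-a * Q1) / (Real.exp (-a * Q1) + Real.exp (-a * Q2))) * Q2)
        = (Real.log 2 * (Real.exp (-a * Q1) + Real.exp (-a * Q2))
            - a * (Q1 - Q2) * Real.exp (-a * Q1))
          / (a * (Real.exp (-a * Q1) + Real.exp (-a * Q2))) := by
      field_simp; ring
    rw [expand]
    apply div_nonneg (by linarith) (by positivity)
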